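/- Let P = conv(u_0, u_1, u_2, u_3) ⊆ ℝ^3 be a full-dimensional lattice simplex with lattice length l(P) ≥ 2. Then there exist finitely many pairs (i, k), with 0 ≤ i ≤ 3 and integers k satisfying 2 ≤ k ≤ min_{j≠i} l_{ij}, such that P equals the union of the corresponding k-dilations P_{i,k}. -/

import Mathlib

open Finset Pointwise

noncomputable section

/-- The real point corresponding to a lattice point. -/
def toR {n : ℕ} (v : Fin n → ℤ) : Fin n → ℝ := fun x => (v x : ℝ)

/-- The lattice simplex (as a subset of `ℝ^n`) with the given lattice vertices. -/
def lsimplex {n m : ℕ} (u : Fin m → Fin n → ℤ) : Set (Fin n → ℝ) :=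
  convexHull ℝ (Set.range fun i => toR (u i))

/-- The lattice length `l_{ij}` of the edge `u_i u_j`:
the gcd of the coordinates of `u_j - u_i`. -/
def latLen {n m : ℕ} (u : Fin m → Fin n → ℤ) (i j : Fin m) : ℕ :=
  Finset.univ.gcd fun x => (u j x - u i x).natAbs

/-- `r_{ij,k}`: the least nonnegative residue of `l_{ij}` modulo `k`. -/
def rmod {n m : ℕ} (u : Fin m → Fin n → ℤ) (i j : Fin m) (k : ℕ) : ℕ :=
  latLen u i j % k

/-- The vertices of the `k`-dilation `P_{i,k}`: the vertex `u_i` together with, for `j ≠ i`,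
the points `((l_{ij} - r_{ij,k})/l_{ij})·u_j + (r_{ij,k}/l_{ij})·u_i`. -/
def dilVert {n m : ℕ} (u : Fin m → Fin n → ℤ) (i : Fin m) (k : ℕ) (j : Fin m) :
    Fin n → ℝ :=
  if j = i then toR (u i)
  else
    ((((latLen u i j : ℝ) - (rmod u i j k : ℝ)) / (latLen u i j : ℝ)) • toR (u j))
      + (((rmod u i j k : ℝ) / (latLen u i j : ℝ)) • toR (u i))

/-- The `k`-dilation `P_{i,k}`. -/
def dil {n m : ℕ} (u : Fin m → Fin n → ℤ) (i : Fin m) (k : ℕ) : Set (Fin n → ℝ) :=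
  convexHull ℝ (Set.range (dilVert u i k))

/-- The primitive edge vector `ũ_{ij} = (u_j - u_i)/l_{ij}`. -/
def primVec {n m : ℕ} (u : Fin m → Fin n → ℤ) (i j : Fin m) : Fin n → ℝ :=
  (latLen u i j : ℝ)⁻¹ • (toR (u j) - toR (u i))

/-- The translated `k`-dilation `P_{i,k,t} = P_{i,k} + Σ_{j ≠ i} t_j ũ_{ij}`. -/
def dilT {n m : ℕ} (u : Fin m → Fin n → ℤ) (i : Fin m) (k : ℕ) (t : Fin m → ℕ) :
    Set (Fin n → ℝ) :=
  (fun y => y + ∑ j ∈ Finset.univ.erase i, (t j : ℝ) • primVec u i j) '' dil u i k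

def rr (l k : ℕ) : ℝ := ((l % k : ℕ) : ℝ) / ((l - l % k : ℕ) : ℝ)

lemma rr_nonneg (l k : ℕ) : 0 ≤ rr l k :=
  div_nonneg (Nat.cast_nonneg _) (Nat.cast_nonneg _)

lemma rr_zero {l k : ℕ} (h : l % k = 0) : rr l k = 0 := by simp [rr, h]

lemma rr_le_div (l k p q : ℕ) (hq : 0 < q) (hk : 0 < k) (hkl : k ≤ l)
    (h : q * (l % k) ≤ p * (l - l % k)) : rr l k ≤ (p : ℝ) / (q : ℝ) := by
  have hlt : l % k < l := lt_of_lt_of_le (Nat.mod_lt _ hk) hkl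
  have hden : (0:ℝ) < ((l - l % k : ℕ) : ℝ) := by
    exact_mod_cast Nat.sub_pos_of_lt hlt
  rw [rr, div_le_div_iff₀ hden (by exact_mod_cast hq)]
  calc ((l % k : ℕ) : ℝ) * q = ((q * (l % k) : ℕ) : ℝ) := by push_cast; ring
    _ ≤ ((p * (l - l % k) : ℕ) : ℝ) := Nat.cast_le.mpr h
    _ = (p:ℝ) * ((l - l % k : ℕ) : ℝ) := by push_cast; ring

lemma rr2_le_half {l : ℕ} (h : 2 ≤ l) : rr l 2 ≤ 1/2 := by
  have := rr_le_div l 2 1 2 (by norm_num) (by norm_num) h (by omega)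
  norm_num at this ⊢; linarith

lemma rr2_le_quarter {l : ℕ} (h : 2 ≤ l) (h3 : l ≠ 3) : rr l 2 ≤ 1/4 := by
  have := rr_le_div l 2 1 4 (by norm_num) (by norm_num) h (by omega)
  norm_num at this ⊢; linarith

lemma rr3_le {l : ℕ} (h : 3 ≤ l) : rr l 3 ≤ 2/3 := by
  have := rr_le_div l 3 2 3 (by norm_num) (by norm_num) h (by omega)
  norm_num at this ⊢; linarith

lemma rr_even {l : ℕ} (h : l % 2 = 0) : rr l 2 = 0 := rr_zero h

lemma sum_erase_four {q p r s : Fin 4} (hqp : q ≠ p) (hqr : q ≠ r) (hqs : q ≠ s)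
    (hpr : p ≠ r) (hps : p ≠ s) (hrs : r ≠ s) (f : Fin 4 → ℝ) :
    ∑ i ∈ Finset.univ.erase q, f i = f p + f r + f s := by
  have huniv : (Finset.univ : Finset (Fin 4)) = {q, p, r, s} := by
    symm
    apply Finset.eq_univ_of_card
    rw [Finset.card_insert_of_notMem (by simp [hqp, hqr, hqs]),
      Finset.card_insert_of_notMem (by simp [hpr, hps]),
      Finset.card_insert_of_notMem (by simp [hrs]), Finset.card_singleton]
    simp
  rw [huniv, Finset.erase_insert (by simp [hqp, hqr, hqs]),
    Finset.sum_insert (by simp [hpr, hps]), Finset.sum_insert (by simp [hrs]),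
    Finset.sum_singleton]
  ring

lemma fourth_exists : ∀ q p r : Fin 4, q ≠ p → q ≠ r → p ≠ r →
    ∃ s, q ≠ s ∧ p ≠ s ∧ r ≠ s := by decide

lemma others_exist : ∀ j : Fin 4, ∃ p r s, j ≠ p ∧ j ≠ r ∧ j ≠ s ∧ p ≠ r ∧ p ≠ s ∧ r ≠ s := by
  decide

lemma cover_four : ∀ q p r s : Fin 4, q ≠ p → q ≠ r → q ≠ s → p ≠ r → p ≠ s → r ≠ s →
    ∀ t, t = q ∨ t = p ∨ t = r ∨ t = s := by decide

def IsCert (L : Fin 4 → Fin 4 → ℕ) (k : Fin 4 → ℕ) (w : Fin 4 → ℝ) : Prop :=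
  (∀ i, 2 ≤ k i) ∧ (∀ i j, i ≠ j → k i ≤ L i j) ∧ (∀ i, 0 ≤ w i) ∧ (0 < ∑ i, w i) ∧
  ∀ j, ∑ i ∈ Finset.univ.erase j, w i * rr (L i j) (k i) ≤ w j

lemma sum3_le_one {A B C : ℕ} (hA : 2 ≤ A) (hB : 2 ≤ B) (hC : 2 ≤ C)
    (h1 : ¬(A = 3 ∧ B = 3)) (h2 : ¬(A = 3 ∧ C = 3)) (h3 : ¬(B = 3 ∧ C = 3)) :
    rr A 2 + rr B 2 + rr C 2 ≤ 1 := by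
  have bA : rr A 2 ≤ if A = 3 then 1/2 else 1/4 := by
    split
    · exact rr2_le_half hA
    · exact rr2_le_quarter hA ‹_›
  have bB : rr B 2 ≤ if B = 3 then 1/2 else 1/4 := by
    split
    · exact rr2_le_half hB
    · exact rr2_le_quarter hB ‹_›
  have bC : rr C 2 ≤ if C = 3 then 1/2 else 1/4 := by
    split
    · exact rr2_le_half hC
    · exact rr2_le_quarter hC ‹_›
  split_ifs at bA bB bC <;> first | tauto | linarith

lemma certGcd (L : Fin 4 → Fin 4 → ℕ) (h2 : ∀ i j, i ≠ j → 2 ≤ L i j) (q : Fin 4)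
    (hq : ∀ j, j ≠ q → L q j = 3) :
    IsCert L (fun t => if t = q then 3 else 2) (fun t => if t = q then 1 else 0) := by
  refine ⟨?_, ?_, ?_, ?_, ?_⟩
  · intro i; dsimp only; split <;> norm_num
  · intro i j hij
    dsimp only
    by_cases hiq : i = q
    · rw [if_pos hiq, hiq, hq j (by rw [← hiq]; exact hij.symm)]
    · rw [if_neg hiq]; exact h2 i j hij
  · intro i; dsimp only; split <;> norm_num
  · simp
  · intro j
    dsimp only
    have hz : ∑ i ∈ Finset.univ.erase j,
        (if i = q then (1:ℝ) else 0) * rr (L i j) (if i = q then 3 else 2) = 0 := by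
      apply Finset.sum_eq_zero
      intro i hi
      by_cases hiq : i = q
      · have hij : i ≠ j := Finset.ne_of_mem_erase hi
        have hjq : j ≠ q := by rw [← hiq]; exact hij.symm
        rw [if_pos hiq, if_pos hiq, hiq, hq j hjq,
          rr_zero (by norm_num : 3 % 3 = 0)]
        ring
      · rw [if_neg hiq]; ring
    rw [hz]
    split <;> norm_num

lemma certA (L : Fin 4 → Fin 4 → ℕ) (h2 : ∀ i j, i ≠ j → 2 ≤ L i j)
    (hA : ∀ j a b : Fin 4, a ≠ j → b ≠ j → a ≠ b → ¬(L a j = 3 ∧ L b j = 3)) :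
    IsCert L (fun _ => 2) (fun _ => 1) := by
  refine ⟨fun _ => le_refl _, fun i j hij => h2 i j hij, fun _ => zero_le_one, by norm_num, fun j => ?_⟩
  obtain ⟨p, r, s, hjp, hjr, hjs, hpr, hps, hrs⟩ := others_exist j
  rw [sum_erase_four hjp hjr hjs hpr hps hrs]
  simp only [one_mul]
  exact sum3_le_one (h2 p j hjp.symm) (h2 r j hjr.symm) (h2 s j hjs.symm)
    (hA j p r hjp.symm hjr.symm hpr) (hA j p s hjp.symm hjs.symm hps)
    (hA j r s hjr.symm hjs.symm hrs)

lemma rr32 : rr 3 2 = 1/2 := by norm_num [rr]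

lemma rr33 : rr 3 3 = 0 := rr_zero (by norm_num)

lemma rr22 : rr 2 2 = 0 := rr_zero (by norm_num)

lemma certC3 (L : Fin 4 → Fin 4 → ℕ) (hsym : ∀ i j, L i j = L j i)
    (h2 : ∀ i j, i ≠ j → 2 ≤ L i j) {q p r s : Fin 4}
    (hqp : q ≠ p) (hqr : q ≠ r) (hqs : q ≠ s) (hpr : p ≠ r) (hps : p ≠ s) (hrs : r ≠ s)
    (eqp : L q p = 3) (eqr : L q r = 3) (epr : L p r = 3)
    (aq : L q s ≠ 3) (ap : L p s ≠ 3) (ar : L r s ≠ 3) :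
    ∃ k w, IsCert L k w := by
  have cov := cover_four q p r s hqp hqr hqs hpr hps hrs
  have tri3 : ∀ a b : Fin 4, a ≠ s → b ≠ s → a ≠ b → L a b = 3 := by
    intro a b ha hb hab
    rcases cov a with h|h|h|h <;> rcases cov b with h'|h'|h'|h' <;>
      first
        | exact absurd h ha
        | exact absurd h' hb
        | exact absurd (h.trans h'.symm) hab
        | (rw [h, h']; assumption)
        | (rw [h, h', hsym]; assumption)
  refine ⟨fun t => if t = s then 2 else if 3 ≤ L t s then 3 else 2,
          fun t => if t = s then 4 else if 3 ≤ L t s then 2 else 1, ?_, ?_, ?_, ?_, ?_⟩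
  · intro i; dsimp only; split
    · norm_num
    · split <;> norm_num
  · intro i j hij
    dsimp only
    by_cases his : i = s
    · rw [if_pos his]; exact h2 i j hij
    · rw [if_neg his]
      by_cases h3 : 3 ≤ L i s
      · rw [if_pos h3]
        by_cases hjs : j = s
        · rw [hjs]; exact h3
        · rw [tri3 i j his hjs hij]
      · rw [if_neg h3]; exact h2 i j hij
  · intro i; dsimp only; split
    · norm_num
    · split <;> norm_num
  · apply Finset.sum_pos'
    · intro i _; split
      · norm_num
      · split <;> norm_num
    · refine ⟨s, Finset.mem_univ s, ?_⟩
      rw [if_pos rfl]; norm_num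
  · -- columns
    have trib : ∀ t t' : Fin 4, t ≠ s → t' ≠ s → t ≠ t' →
        (if t = s then (4:ℝ) else if 3 ≤ L t s then 2 else 1) *
          rr (L t t') (if t = s then 2 else if 3 ≤ L t s then 3 else 2) ≤ 1/2 := by
      intro t t' hts ht's htt'
      rw [if_neg hts, if_neg hts, tri3 t t' hts ht's htt']
      by_cases hh : 3 ≤ L t s
      · rw [if_pos hh, if_pos hh, rr33]; norm_num
      · rw [if_neg hh, if_neg hh, rr32]; norm_num
    have sterm : ∀ t : Fin 4, t ≠ s → L s t ≠ 3 →
        (if s = s then (4:ℝ) else if 3 ≤ L s s then 2 else 1) *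
          rr (L s t) (if s = s then 2 else if 3 ≤ L s s then 3 else 2) ≤ 1 := by
      intro t hts h3
      rw [if_pos rfl, if_pos rfl]
      have := rr2_le_quarter (h2 s t (fun h => hts h.symm)) h3
      linarith
    have szero : ∀ t : Fin 4, t ≠ s → L s t = 2 →
        (if s = s then (4:ℝ) else if 3 ≤ L s s then 2 else 1) *
          rr (L s t) (if s = s then 2 else if 3 ≤ L s s then 3 else 2) = 0 := by
      intro t hts h2'
      rw [if_pos rfl, if_pos rfl, h2', rr22]; ring
    have colTri : ∀ a b c : Fin 4, a ≠ s → b ≠ s → c ≠ s → b ≠ a → c ≠ a → b ≠ c →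
        L s a ≠ 3 →
        (if b = s then (4:ℝ) else if 3 ≤ L b s then 2 else 1) *
            rr (L b a) (if b = s then 2 else if 3 ≤ L b s then 3 else 2) +
          (if c = s then (4:ℝ) else if 3 ≤ L c s then 2 else 1) *
            rr (L c a) (if c = s then 2 else if 3 ≤ L c s then 3 else 2) +
          (if s = s then (4:ℝ) else if 3 ≤ L s s then 2 else 1) *
            rr (L s a) (if s = s then 2 else if 3 ≤ L s s then 3 else 2) ≤
        if a = s then 4 else if 3 ≤ L a s then 2 else 1 := by
      intro a b c ha hb hc hba hca hbc hsa3
      have t1 := trib b a hb ha hba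
      have t2 := trib c a hc ha hca
      rw [if_neg ha]
      by_cases hh : 3 ≤ L a s
      · have t3 := sterm a ha hsa3
        rw [if_pos hh]; linarith
      · have ha2 : L s a = 2 := by rw [hsym]; have := h2 a s ha; omega
        have t3 := szero a ha ha2
        rw [if_neg hh, t3]; linarith
    intro j
    rcases cov j with h|h|h|h <;> rw [h] <;> dsimp only
    · rw [sum_erase_four hqp hqr hqs hpr hps hrs]
      exact colTri q p r hqs hps hrs (Ne.symm hqp) (Ne.symm hqr) hpr (by rw [hsym]; exact aq)
    · rw [sum_erase_four (Ne.symm hqp) hpr hps hqr hqs hrs]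
      exact colTri p q r hps hqs hrs hqp (Ne.symm hpr) hqr (by rw [hsym]; exact ap)
    · rw [sum_erase_four (Ne.symm hqr) (Ne.symm hpr) hrs hqp hqs hps]
      exact colTri r q p hrs hqs hps hqr hpr hqp (by rw [hsym]; exact ar)
    · rw [sum_erase_four (Ne.symm hqs) (Ne.symm hps) (Ne.symm hrs) hqp hqr hpr]
      have tt : ∀ t : Fin 4, t ≠ s →
          (if t = s then (4:ℝ) else if 3 ≤ L t s then 2 else 1) *
            rr (L t s) (if t = s then 2 else if 3 ≤ L t s then 3 else 2) ≤ 4/3 := by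
        intro t hts
        rw [if_neg hts, if_neg hts]
        by_cases hh : 3 ≤ L t s
        · rw [if_pos hh, if_pos hh]
          have := rr3_le hh
          linarith
        · rw [if_neg hh, if_neg hh]
          have h22 : L t s = 2 := by have := h2 t s hts; omega
          rw [h22, rr22]; norm_num
      have t1 := tt q hqs
      have t2 := tt p hps
      have t3 := tt r hrs
      rw [if_pos rfl]
      linarith

lemma sum_univ_four' {q p r s : Fin 4} (hqp : q ≠ p) (hqr : q ≠ r) (hqs : q ≠ s)
    (hpr : p ≠ r) (hps : p ≠ s) (hrs : r ≠ s) (f : Fin 4 → ℝ) :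
    ∑ i, f i = f q + f p + f r + f s := by
  rw [← Finset.add_sum_erase Finset.univ f (Finset.mem_univ q),
    sum_erase_four hqp hqr hqs hpr hps hrs]
  ring

def pick {α : Type*} (q p r s : Fin 4) (a b c d : α) : Fin 4 → α :=
  fun t => if t = q then a else if t = p then b else if t = r then c else d

lemma certOf (L : Fin 4 → Fin 4 → ℕ) {q p r s : Fin 4}
    (hqp : q ≠ p) (hqr : q ≠ r) (hqs : q ≠ s) (hpr : p ≠ r) (hps : p ≠ s) (hrs : r ≠ s)
    (kq kp kr ks : ℕ) (wq wp wr ws : ℝ)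
    (hk1 : 2 ≤ kq) (hk2 : 2 ≤ kp) (hk3 : 2 ≤ kr) (hk4 : 2 ≤ ks)
    (a1 : kq ≤ L q p) (a2 : kq ≤ L q r) (a3 : kq ≤ L q s)
    (a4 : kp ≤ L p q) (a5 : kp ≤ L p r) (a6 : kp ≤ L p s)
    (a7 : kr ≤ L r q) (a8 : kr ≤ L r p) (a9 : kr ≤ L r s)
    (a10 : ks ≤ L s q) (a11 : ks ≤ L s p) (a12 : ks ≤ L s r)
    (hw1 : 0 ≤ wq) (hw2 : 0 ≤ wp) (hw3 : 0 ≤ wr) (hw4 : 0 ≤ ws)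
    (hwpos : 0 < wq + wp + wr + ws)
    (c1 : wp * rr (L p q) kp + wr * rr (L r q) kr + ws * rr (L s q) ks ≤ wq)
    (c2 : wq * rr (L q p) kq + wr * rr (L r p) kr + ws * rr (L s p) ks ≤ wp)
    (c3 : wq * rr (L q r) kq + wp * rr (L p r) kp + ws * rr (L s r) ks ≤ wr)
    (c4 : wq * rr (L q s) kq + wp * rr (L p s) kp + wr * rr (L r s) kr ≤ ws) :
    ∃ k w, IsCert L k w := by
  have cov := cover_four q p r s hqp hqr hqs hpr hps hrs
  set k : Fin 4 → ℕ := pick q p r s kq kp kr ks with hk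
  set w : Fin 4 → ℝ := pick q p r s wq wp wr ws with hw
  have ekq : k q = kq := by simp [hk, pick]
  have ekp : k p = kp := by simp [hk, pick, (Ne.symm hqp : p ≠ q)]
  have ekr : k r = kr := by simp [hk, pick, (Ne.symm hqr : r ≠ q), (Ne.symm hpr : r ≠ p)]
  have eks : k s = ks := by
    simp [hk, pick, (Ne.symm hqs : s ≠ q), (Ne.symm hps : s ≠ p), (Ne.symm hrs : s ≠ r)]
  have ewq : w q = wq := by simp [hw, pick]
  have ewp : w p = wp := by simp [hw, pick, (Ne.symm hqp : p ≠ q)]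
  have ewr : w r = wr := by simp [hw, pick, (Ne.symm hqr : r ≠ q), (Ne.symm hpr : r ≠ p)]
  have ews : w s = ws := by
    simp [hw, pick, (Ne.symm hqs : s ≠ q), (Ne.symm hps : s ≠ p), (Ne.symm hrs : s ≠ r)]
  refine ⟨k, w, ?_, ?_, ?_, ?_, ?_⟩
  · intro i
    rcases cov i with h|h|h|h <;> rw [h]
    · rw [ekq]; exact hk1
    · rw [ekp]; exact hk2
    · rw [ekr]; exact hk3
    · rw [eks]; exact hk4
  · intro i j hij
    rcases cov i with h|h|h|h <;> rcases cov j with h'|h'|h'|h' <;> rw [h, h'] at hij ⊢ <;>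
      first
        | exact absurd rfl hij
        | (rw [ekq]; assumption)
        | (rw [ekp]; assumption)
        | (rw [ekr]; assumption)
        | (rw [eks]; assumption)
  · intro i
    rcases cov i with h|h|h|h <;> rw [h]
    · rw [ewq]; exact hw1
    · rw [ewp]; exact hw2
    · rw [ewr]; exact hw3
    · rw [ews]; exact hw4
  · rw [sum_univ_four' hqp hqr hqs hpr hps hrs w, ewq, ewp, ewr, ews]
    exact hwpos
  · intro j
    rcases cov j with h|h|h|h <;> rw [h]
    · rw [sum_erase_four hqp hqr hqs hpr hps hrs, ekp, ekr, eks, ewp, ewr, ews, ewq]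
      exact c1
    · rw [sum_erase_four (Ne.symm hqp) hpr hps hqr hqs hrs, ekq, ekr, eks, ewq, ewr, ews, ewp]
      exact c2
    · rw [sum_erase_four (Ne.symm hqr) (Ne.symm hpr) hrs hqp hqs hps,
        ekq, ekp, eks, ewq, ewp, ews, ewr]
      exact c3
    · rw [sum_erase_four (Ne.symm hqs) (Ne.symm hps) (Ne.symm hrs) hqp hqr hpr,
        ekq, ekp, ekr, ewq, ewp, ewr, ews]
      exact c4

lemma certC4 (L : Fin 4 → Fin 4 → ℕ) (hsym : ∀ i j, L i j = L j i)
    (h2 : ∀ i j, i ≠ j → 2 ≤ L i j) {q p r s : Fin 4}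
    (hqp : q ≠ p) (hqr : q ≠ r) (hqs : q ≠ s) (hpr : p ≠ r) (hps : p ≠ s) (hrs : r ≠ s)
    (eqp : L q p = 3) (eqr : L q r = 3) (eps : L p s = 3) (ers : L r s = 3)
    (he3 : L q s ≠ 3) (hc3 : L p r ≠ 3) : ∃ k w, IsCert L k w := by
  have epq : L p q = 3 := by rw [hsym]; exact eqp
  have erq : L r q = 3 := by rw [hsym]; exact eqr
  have esp : L s p = 3 := by rw [hsym]; exact eps
  have esr : L s r = 3 := by rw [hsym]; exact ers
  have he2 : 2 ≤ L q s := h2 q s hqs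
  have hc2 : 2 ≤ L p r := h2 p r hpr
  have esq : L s q = L q s := hsym s q
  have erp : L r p = L p r := hsym r p
  have z1 : rr (L p q) 3 = 0 := by rw [epq]; exact rr33
  have z2 : rr (L r q) 3 = 0 := by rw [erq]; exact rr33
  have z3 : rr (L s p) 3 = 0 := by rw [esp]; exact rr33
  have z4 : rr (L s r) 3 = 0 := by rw [esr]; exact rr33
  have z5 : rr (L q p) 3 = 0 := by rw [eqp]; exact rr33
  have z6 : rr (L q r) 3 = 0 := by rw [eqr]; exact rr33
  have z7 : rr (L p s) 3 = 0 := by rw [eps]; exact rr33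
  have z8 : rr (L r s) 3 = 0 := by rw [ers]; exact rr33
  by_cases he : L q s % 2 = 1
  · have he5 : 5 ≤ L q s := by omega
    by_cases hc : L p r % 2 = 1
    · have hc5 : 5 ≤ L p r := by omega
      refine certOf L hqp hqr hqs hpr hps hrs 3 3 3 3 1 1 1 1
        (by norm_num) (by norm_num) (by norm_num) (by norm_num)
        eqp.symm.le eqr.symm.le (by omega) epq.symm.le (by omega) eps.symm.le
        erq.symm.le (by omega) ers.symm.le (by omega) esp.symm.le esr.symm.le
        (by norm_num) (by norm_num) (by norm_num) (by norm_num) (by norm_num) ?_ ?_ ?_ ?_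
      · have b := rr3_le (show 3 ≤ L s q by omega)
        linarith
      · have b := rr3_le (show 3 ≤ L r p by omega)
        linarith
      · have b := rr3_le (show 3 ≤ L p r by omega)
        linarith
      · have b := rr3_le (show 3 ≤ L q s by omega)
        linarith
    · refine certOf L hqp hqr hqs hpr hps hrs 3 2 2 3 1 0 0 1
        (by norm_num) (by norm_num) (by norm_num) (by norm_num)
        eqp.symm.le eqr.symm.le (by omega) (by omega) (by omega) (by omega)
        (by omega) (by omega) (by omega) (by omega) esp.symm.le esr.symm.le
        (by norm_num) (by norm_num) (by norm_num) (by norm_num) (by norm_num) ?_ ?_ ?_ ?_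
      · have b := rr3_le (show 3 ≤ L s q by omega)
        have n1 := rr_nonneg (L p q) 2
        have n2 := rr_nonneg (L r q) 2
        linarith
      · linarith [rr_nonneg (L r p) 2]
      · linarith [rr_nonneg (L p r) 2]
      · have b := rr3_le (show 3 ≤ L q s by omega)
        linarith [rr_nonneg (L p s) 2, rr_nonneg (L r s) 2]
  · by_cases hc : L p r % 2 = 1
    · have hc5 : 5 ≤ L p r := by omega
      refine certOf L hqp hqr hqs hpr hps hrs 2 3 3 2 0 1 1 0
        (by norm_num) (by norm_num) (by norm_num) (by norm_num)
        (by omega) (by omega) (by omega) epq.symm.le (by omega) eps.symm.le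
        erq.symm.le (by omega) ers.symm.le (by omega) (by omega) (by omega)
        (by norm_num) (by norm_num) (by norm_num) (by norm_num) (by norm_num) ?_ ?_ ?_ ?_
      · linarith [rr_nonneg (L s q) 2]
      · have b := rr3_le (show 3 ≤ L r p by omega)
        linarith [rr_nonneg (L q p) 2, rr_nonneg (L s p) 2]
      · have b := rr3_le (show 3 ≤ L p r by omega)
        linarith [rr_nonneg (L q r) 2, rr_nonneg (L s r) 2]
      · linarith [rr_nonneg (L q s) 2, rr_nonneg (L r s) 2]
    · -- both diagonals even : all k = 2, w = 1
      have y1 : rr (L p q) 2 = 1/2 := by rw [epq]; exact rr32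
      have y2 : rr (L r q) 2 = 1/2 := by rw [erq]; exact rr32
      have y3 : rr (L s p) 2 = 1/2 := by rw [esp]; exact rr32
      have y4 : rr (L s r) 2 = 1/2 := by rw [esr]; exact rr32
      have y5 : rr (L q p) 2 = 1/2 := by rw [eqp]; exact rr32
      have y6 : rr (L q r) 2 = 1/2 := by rw [eqr]; exact rr32
      have y7 : rr (L p s) 2 = 1/2 := by rw [eps]; exact rr32
      have y8 : rr (L r s) 2 = 1/2 := by rw [ers]; exact rr32
      have w1 : rr (L s q) 2 = 0 := rr_even (by omega)
      have w2 : rr (L r p) 2 = 0 := rr_even (by omega)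
      have w3 : rr (L p r) 2 = 0 := rr_even (by omega)
      have w4 : rr (L q s) 2 = 0 := rr_even (by omega)
      refine certOf L hqp hqr hqs hpr hps hrs 2 2 2 2 1 1 1 1
        (by norm_num) (by norm_num) (by norm_num) (by norm_num)
        (by omega) (by omega) (by omega) (by omega) (by omega) (by omega)
        (by omega) (by omega) (by omega) (by omega) (by omega) (by omega)
        (by norm_num) (by norm_num) (by norm_num) (by norm_num) (by norm_num) ?_ ?_ ?_ ?_ <;>
        linarith

lemma certP4odd (L : Fin 4 → Fin 4 → ℕ) (hsym : ∀ i j, L i j = L j i)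
    (h2 : ∀ i j, i ≠ j → 2 ≤ L i j) {q p r s : Fin 4}
    (hqp : q ≠ p) (hqr : q ≠ r) (hqs : q ≠ s) (hpr : p ≠ r) (hps : p ≠ s) (hrs : r ≠ s)
    (eqp : L q p = 3) (eqr : L q r = 3) (eps : L p s = 3)
    (hc3 : L p r ≠ 3) (he3 : L q s ≠ 3) (hd3 : L r s ≠ 3)
    (he : L q s % 2 = 1) : ∃ k w, IsCert L k w := by
  have epq : L p q = 3 := by rw [hsym]; exact eqp
  have erq : L r q = 3 := by rw [hsym]; exact eqr
  have esp : L s p = 3 := by rw [hsym]; exact eps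
  have he2 : 2 ≤ L q s := h2 q s hqs
  have hc2 : 2 ≤ L p r := h2 p r hpr
  have hd2 : 2 ≤ L r s := h2 r s hrs
  have esq : L s q = L q s := hsym s q
  have erp : L r p = L p r := hsym r p
  have esr : L s r = L r s := hsym s r
  have he5 : 5 ≤ L q s := by omega
  have z5 : rr (L q p) 3 = 0 := by rw [eqp]; exact rr33
  have z6 : rr (L q r) 3 = 0 := by rw [eqr]; exact rr33
  have z7 : rr (L p s) 3 = 0 := by rw [eps]; exact rr33
  have z1 : rr (L p q) 3 = 0 := by rw [epq]; exact rr33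
  have z3 : rr (L s p) 3 = 0 := by rw [esp]; exact rr33
  have y1 : rr (L p q) 2 = 1/2 := by rw [epq]; exact rr32
  have y2 : rr (L r q) 2 = 1/2 := by rw [erq]; exact rr32
  have y3 : rr (L s p) 2 = 1/2 := by rw [esp]; exact rr32
  have y7 : rr (L p s) 2 = 1/2 := by rw [eps]; exact rr32
  by_cases hc : L p r % 2 = 1
  · have hc5 : 5 ≤ L p r := by omega
    refine certOf L hqp hqr hqs hpr hps hrs 3 3 2 2 3 3 4 4
      (by norm_num) (by norm_num) (by norm_num) (by norm_num)
      eqp.symm.le eqr.symm.le (by omega) epq.symm.le (by omega) eps.symm.le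
      (by omega) (by omega) (by omega) (by omega) (by omega) (by omega)
      (by norm_num) (by norm_num) (by norm_num) (by norm_num) (by norm_num) ?_ ?_ ?_ ?_
    · have b := rr2_le_quarter (show 2 ≤ L s q by omega) (by omega)
      linarith
    · have b := rr2_le_quarter (show 2 ≤ L r p by omega) (by omega)
      linarith
    · have b1 := rr3_le (show 3 ≤ L p r by omega)
      have b2 := rr2_le_quarter (show 2 ≤ L s r by omega) (by omega)
      linarith
    · have b1 := rr3_le (show 3 ≤ L q s by omega)
      have b2 := rr2_le_quarter (show 2 ≤ L r s by omega) (by omega)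
      linarith
  · by_cases hd : L r s % 2 = 1
    · have hd5 : 5 ≤ L r s := by omega
      refine certOf L hqp hqr hqs hpr hps hrs 3 2 2 3 3 0 2 3
        (by norm_num) (by norm_num) (by norm_num) (by norm_num)
        eqp.symm.le eqr.symm.le (by omega) (by omega) (by omega) (by omega)
        (by omega) (by omega) (by omega) (by omega) esp.symm.le (by omega)
        (by norm_num) (by norm_num) (by norm_num) (by norm_num) (by norm_num) ?_ ?_ ?_ ?_
      · have b := rr3_le (show 3 ≤ L s q by omega)
        linarith
      · have w2 : rr (L r p) 2 = 0 := rr_even (by omega)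
        linarith
      · have b := rr3_le (show 3 ≤ L s r by omega)
        linarith [rr_nonneg (L p r) 2]
      · have b1 := rr3_le (show 3 ≤ L q s by omega)
        have b2 := rr2_le_quarter (show 2 ≤ L r s by omega) (by omega)
        linarith [rr_nonneg (L p s) 2]
    · refine certOf L hqp hqr hqs hpr hps hrs 3 2 2 2 1 1 0 2
        (by norm_num) (by norm_num) (by norm_num) (by norm_num)
        eqp.symm.le eqr.symm.le (by omega) (by omega) (by omega) (by omega)
        (by omega) (by omega) (by omega) (by omega) (by omega) (by omega)
        (by norm_num) (by norm_num) (by norm_num) (by norm_num) (by norm_num) ?_ ?_ ?_ ?_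
      · have b := rr2_le_quarter (show 2 ≤ L s q by omega) (by omega)
        linarith [rr_nonneg (L r q) 2]
      · linarith [rr_nonneg (L r p) 2]
      · have w2 : rr (L p r) 2 = 0 := rr_even (by omega)
        have w3 : rr (L s r) 2 = 0 := rr_even (by omega)
        linarith
      · have b := rr3_le (show 3 ≤ L q s by omega)
        linarith [rr_nonneg (L r s) 2]

lemma certP4even (L : Fin 4 → Fin 4 → ℕ) (hsym : ∀ i j, L i j = L j i)
    (h2 : ∀ i j, i ≠ j → 2 ≤ L i j) {q p r s : Fin 4}
    (hqp : q ≠ p) (hqr : q ≠ r) (hqs : q ≠ s) (hpr : p ≠ r) (hps : p ≠ s) (hrs : r ≠ s)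
    (eqp : L q p = 3) (eqr : L q r = 3) (eps : L p s = 3)
    (hc3 : L p r ≠ 3) (he3 : L q s ≠ 3) (hd3 : L r s ≠ 3)
    (he : L q s % 2 = 0) (hc : L p r % 2 = 0) : ∃ k w, IsCert L k w := by
  have epq : L p q = 3 := by rw [hsym]; exact eqp
  have erq : L r q = 3 := by rw [hsym]; exact eqr
  have esp : L s p = 3 := by rw [hsym]; exact eps
  have he2 : 2 ≤ L q s := h2 q s hqs
  have hc2 : 2 ≤ L p r := h2 p r hpr
  have hd2 : 2 ≤ L r s := h2 r s hrs
  have esq : L s q = L q s := hsym s q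
  have erp : L r p = L p r := hsym r p
  have esr : L s r = L r s := hsym s r
  have y1 : rr (L p q) 2 = 1/2 := by rw [epq]; exact rr32
  have y2 : rr (L r q) 2 = 1/2 := by rw [erq]; exact rr32
  have y3 : rr (L s p) 2 = 1/2 := by rw [esp]; exact rr32
  have y5 : rr (L q p) 2 = 1/2 := by rw [eqp]; exact rr32
  have y6 : rr (L q r) 2 = 1/2 := by rw [eqr]; exact rr32
  have y7 : rr (L p s) 2 = 1/2 := by rw [eps]; exact rr32
  have w1 : rr (L s q) 2 = 0 := rr_even (by omega)
  have w2 : rr (L r p) 2 = 0 := rr_even (by omega)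
  have w3 : rr (L p r) 2 = 0 := rr_even (by omega)
  have w4 : rr (L q s) 2 = 0 := rr_even (by omega)
  refine certOf L hqp hqr hqs hpr hps hrs 2 2 2 2 1 1 1 1
    (by norm_num) (by norm_num) (by norm_num) (by norm_num)
    (by omega) (by omega) (by omega) (by omega) (by omega) (by omega)
    (by omega) (by omega) (by omega) (by omega) (by omega) (by omega)
    (by norm_num) (by norm_num) (by norm_num) (by norm_num) (by norm_num) ?_ ?_ ?_ ?_
  · linarith
  · linarith
  · have b := rr2_le_half (show 2 ≤ L s r by omega)
    linarith
  · have b := rr2_le_half (show 2 ≤ L r s by omega)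
    linarith

lemma certP3 (L : Fin 4 → Fin 4 → ℕ) (hsym : ∀ i j, L i j = L j i)
    (h2 : ∀ i j, i ≠ j → 2 ≤ L i j) {q p r s : Fin 4}
    (hqp : q ≠ p) (hqr : q ≠ r) (hqs : q ≠ s) (hpr : p ≠ r) (hps : p ≠ s) (hrs : r ≠ s)
    (eqp : L q p = 3) (eqr : L q r = 3)
    (hc3 : L p r ≠ 3) (he3 : L q s ≠ 3) (hf3 : L p s ≠ 3) (hg3 : L r s ≠ 3) :
    ∃ k w, IsCert L k w := by
  have epq : L p q = 3 := by rw [hsym]; exact eqp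
  have erq : L r q = 3 := by rw [hsym]; exact eqr
  have he2 : 2 ≤ L q s := h2 q s hqs
  have hc2 : 2 ≤ L p r := h2 p r hpr
  have hf2 : 2 ≤ L p s := h2 p s hps
  have hg2 : 2 ≤ L r s := h2 r s hrs
  have esq : L s q = L q s := hsym s q
  have erp : L r p = L p r := hsym r p
  have esp : L s p = L p s := hsym s p
  have esr : L s r = L r s := hsym s r
  have y1 : rr (L p q) 2 = 1/2 := by rw [epq]; exact rr32
  have y2 : rr (L r q) 2 = 1/2 := by rw [erq]; exact rr32
  have b1 := rr2_le_quarter (show 2 ≤ L r p by omega) (by omega)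
  have b2 := rr2_le_quarter (show 2 ≤ L s p by omega) (by omega)
  have b3 := rr2_le_quarter (show 2 ≤ L p r by omega) (by omega)
  have b4 := rr2_le_quarter (show 2 ≤ L s r by omega) (by omega)
  have b5 := rr2_le_quarter (show 2 ≤ L p s by omega) (by omega)
  have b6 := rr2_le_quarter (show 2 ≤ L r s by omega) (by omega)
  by_cases he : L q s % 2 = 1
  · have he5 : 5 ≤ L q s := by omega
    have z5 : rr (L q p) 3 = 0 := by rw [eqp]; exact rr33
    have z6 : rr (L q r) 3 = 0 := by rw [eqr]; exact rr33
    refine certOf L hqp hqr hqs hpr hps hrs 3 2 2 2 2 1 1 2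
      (by norm_num) (by norm_num) (by norm_num) (by norm_num)
      eqp.symm.le eqr.symm.le (by omega) (by omega) (by omega) (by omega)
      (by omega) (by omega) (by omega) (by omega) (by omega) (by omega)
      (by norm_num) (by norm_num) (by norm_num) (by norm_num) (by norm_num) ?_ ?_ ?_ ?_
    · have b := rr2_le_quarter (show 2 ≤ L s q by omega) (by omega)
      linarith
    · linarith
    · linarith
    · have b := rr3_le (show 3 ≤ L q s by omega)
      linarith
  · have w4 : rr (L q s) 2 = 0 := rr_even (by omega)
    have w5 : rr (L s q) 2 = 0 := rr_even (by omega)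
    have y5 : rr (L q p) 2 = 1/2 := by rw [eqp]; exact rr32
    have y6 : rr (L q r) 2 = 1/2 := by rw [eqr]; exact rr32
    refine certOf L hqp hqr hqs hpr hps hrs 2 2 2 2 1 1 1 1
      (by norm_num) (by norm_num) (by norm_num) (by norm_num)
      (by omega) (by omega) (by omega) (by omega) (by omega) (by omega)
      (by omega) (by omega) (by omega) (by omega) (by omega) (by omega)
      (by norm_num) (by norm_num) (by norm_num) (by norm_num) (by norm_num) ?_ ?_ ?_ ?_ <;>
      linarith

lemma core (L : Fin 4 → Fin 4 → ℕ) (hsym : ∀ i j, L i j = L j i)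
    (h2 : ∀ i j, i ≠ j → 2 ≤ L i j) : ∃ k w, IsCert L k w := by
  by_cases hA : ∃ q a b : Fin 4, a ≠ q ∧ b ≠ q ∧ a ≠ b ∧ L q a = 3 ∧ L q b = 3
  · obtain ⟨q, p, r, hpq, hrq, hpr2, eqp, eqr⟩ := hA
    have hqp : q ≠ p := Ne.symm hpq
    have hqr : q ≠ r := Ne.symm hrq
    have hpr : p ≠ r := hpr2
    obtain ⟨s, hqs, hps, hrs⟩ := fourth_exists q p r hqp hqr hpr
    have cov := cover_four q p r s hqp hqr hqs hpr hps hrs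
    by_cases hqs3 : L q s = 3
    · refine ⟨_, _, certGcd L h2 q ?_⟩
      intro j hj
      rcases cov j with h|h|h|h <;> rw [h]
      · exact absurd h hj
      · exact eqp
      · exact eqr
      · exact hqs3
    · by_cases hpr3 : L p r = 3
      · by_cases hps3 : L p s = 3
        · refine ⟨_, _, certGcd L h2 p ?_⟩
          intro j hj
          rcases cov j with h|h|h|h <;> rw [h]
          · rw [hsym]; exact eqp
          · exact absurd h hj
          · exact hpr3
          · exact hps3
        · by_cases hrs3 : L r s = 3
          · refine ⟨_, _, certGcd L h2 r ?_⟩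
            intro j hj
            rcases cov j with h|h|h|h <;> rw [h]
            · rw [hsym]; exact eqr
            · rw [hsym]; exact hpr3
            · exact absurd h hj
            · exact hrs3
          · exact certC3 L hsym h2 hqp hqr hqs hpr hps hrs eqp eqr hpr3 hqs3 hps3 hrs3
      · by_cases hps3 : L p s = 3
        · by_cases hrs3 : L r s = 3
          · exact certC4 L hsym h2 hqp hqr hqs hpr hps hrs eqp eqr hps3 hrs3 hqs3 hpr3
          · -- P4 path r-q-p-s
            by_cases he : L q s % 2 = 1
            · exact certP4odd L hsym h2 hqp hqr hqs hpr hps hrs eqp eqr hps3 hpr3 hqs3 hrs3 he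
            · by_cases hc : L p r % 2 = 1
              · -- mirrored : (q,p,r,s) → (p,q,s,r)
                exact certP4odd L hsym h2 (Ne.symm hqp) hps hpr hqs hqr (Ne.symm hrs)
                  (by rw [hsym]; exact eqp) hps3 eqr hqs3 hpr3
                  (by rw [hsym]; exact hrs3) hc
              · exact certP4even L hsym h2 hqp hqr hqs hpr hps hrs eqp eqr hps3 hpr3 hqs3
                  hrs3 (by omega) (by omega)
        · by_cases hrs3 : L r s = 3
          · -- P4 path p-q-r-s : relabel (q,p,r,s) → (q,r,p,s)
            by_cases he : L q s % 2 = 1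
            · exact certP4odd L hsym h2 hqr hqp hqs (Ne.symm hpr) hrs hps
                eqr eqp hrs3 (by rw [hsym]; exact hpr3) hqs3 hps3 he
            · by_cases hc : L r p % 2 = 1
              · -- mirrored : (q,r,p,s) → (r,q,s,p)
                exact certP4odd L hsym h2 (Ne.symm hqr) hrs (Ne.symm hpr) hqs hqp (Ne.symm hps)
                  (by rw [hsym]; exact eqr) hrs3 eqp hqs3
                  (by rw [hsym]; exact hpr3) (by rw [hsym]; exact hps3) hc
              · exact certP4even L hsym h2 hqr hqp hqs (Ne.symm hpr) hrs hps
                  eqr eqp hrs3 (by rw [hsym]; exact hpr3) hqs3 hps3 (by omega)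
                  (by omega)
          · exact certP3 L hsym h2 hqp hqr hqs hpr hps hrs eqp eqr hpr3 hqs3 hps3 hrs3
  · refine ⟨_, _, certA L h2 ?_⟩
    intro j a b ha hb hab hcon
    exact hA ⟨j, a, b, ha, hb, hab, by rw [hsym]; exact hcon.1, by rw [hsym]; exact hcon.2⟩

lemma sum_erase_to_ite (F : Fin 4 → Fin 4 → ℝ) (i : Fin 4) :
    ∑ j ∈ Finset.univ.erase i, F i j = ∑ j, if j = i then 0 else F i j := by
  rw [← Finset.add_sum_erase Finset.univ (fun j => if j = i then 0 else F i j)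
    (Finset.mem_univ i), if_pos rfl, zero_add]
  exact Finset.sum_congr rfl fun j hj => (if_neg (Finset.ne_of_mem_erase hj)).symm

lemma sum_erase_to_ite' (F : Fin 4 → Fin 4 → ℝ) (j : Fin 4) :
    ∑ i ∈ Finset.univ.erase j, F i j = ∑ i, if j = i then 0 else F i j := by
  rw [← Finset.add_sum_erase Finset.univ (fun i => if j = i then 0 else F i j)
    (Finset.mem_univ j), if_pos rfl, zero_add]
  exact Finset.sum_congr rfl fun i hi =>
    (if_neg (Ne.symm (Finset.ne_of_mem_erase hi))).symm

lemma sum_swap_erase (F : Fin 4 → Fin 4 → ℝ) :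
    ∑ i, ∑ j ∈ Finset.univ.erase i, F i j = ∑ j, ∑ i ∈ Finset.univ.erase j, F i j :=
  calc ∑ i, ∑ j ∈ Finset.univ.erase i, F i j
      = ∑ i, ∑ j, if j = i then 0 else F i j :=
        Finset.sum_congr rfl fun i _ => sum_erase_to_ite F i
    _ = ∑ j, ∑ i, if j = i then 0 else F i j := Finset.sum_comm
    _ = ∑ j, ∑ i ∈ Finset.univ.erase j, F i j :=
        Finset.sum_congr rfl fun j _ => (sum_erase_to_ite' F j).symm

lemma dual_to_primal (L : Fin 4 → Fin 4 → ℕ) (k : Fin 4 → ℕ) (w : Fin 4 → ℝ)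
    (hw0 : ∀ i, 0 ≤ w i) (hwpos : 0 < ∑ i, w i)
    (hcol : ∀ j, ∑ i ∈ Finset.univ.erase j, w i * rr (L i j) (k i) ≤ w j)
    (lam : Fin 4 → ℝ) (hl0 : ∀ i, 0 ≤ lam i) :
    ∃ i, ∑ j ∈ Finset.univ.erase i, lam j * rr (L i j) (k i) ≤ lam i := by
  by_contra hcon
  push_neg at hcon
  obtain ⟨i0, hi0⟩ : ∃ i, 0 < w i := by
    by_contra hno; push_neg at hno
    have : ∑ i, w i ≤ 0 := Finset.sum_nonpos fun i _ => hno i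
    linarith
  have strict : ∑ i, w i * lam i <
      ∑ i, w i * ∑ j ∈ Finset.univ.erase i, lam j * rr (L i j) (k i) := by
    apply Finset.sum_lt_sum
    · exact fun i _ => mul_le_mul_of_nonneg_left (hcon i).le (hw0 i)
    · exact ⟨i0, Finset.mem_univ i0, mul_lt_mul_of_pos_left (hcon i0) hi0⟩
  have swap : ∑ i, w i * ∑ j ∈ Finset.univ.erase i, lam j * rr (L i j) (k i)
      = ∑ j, lam j * ∑ i ∈ Finset.univ.erase j, w i * rr (L i j) (k i) := by
    have l1 : ∀ i : Fin 4, w i * ∑ j ∈ Finset.univ.erase i, lam j * rr (L i j) (k i)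
        = ∑ j ∈ Finset.univ.erase i, w i * (lam j * rr (L i j) (k i)) := by
      intro i; rw [Finset.mul_sum]
    have l2 : ∀ j : Fin 4, lam j * ∑ i ∈ Finset.univ.erase j, w i * rr (L i j) (k i)
        = ∑ i ∈ Finset.univ.erase j, w i * (lam j * rr (L i j) (k i)) := by
      intro j
      rw [Finset.mul_sum]
      exact Finset.sum_congr rfl fun i _ => by ring
    simp_rw [l1, l2]
    exact sum_swap_erase _
  have final : ∑ j, lam j * ∑ i ∈ Finset.univ.erase j, w i * rr (L i j) (k i)
      ≤ ∑ j, lam j * w j :=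
    Finset.sum_le_sum fun j _ => mul_le_mul_of_nonneg_left (hcol j) (hl0 j)
  have comm : ∑ i, w i * lam i = ∑ j, lam j * w j :=
    Finset.sum_congr rfl fun i _ => mul_comm _ _
  linarith

lemma mem_hull_of_weights {ι : Type*} [Fintype ι] {E : Type*} [AddCommGroup E] [Module ℝ E]
    {v : ι → E} {μ : ι → ℝ} (h0 : ∀ j, 0 ≤ μ j) (h1 : ∑ j, μ j = 1) :
    (∑ j, μ j • v j) ∈ convexHull ℝ (Set.range v) := by
  have := Finset.centerMass_mem_convexHull Finset.univ (fun i _ => h0 i)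
    (by rw [h1]; exact one_pos) (fun i _ => Set.mem_range_self (f := v) i)
  rwa [Finset.centerMass_eq_of_sum_1 _ _ h1] at this

lemma hull_rep {ι : Type*} [Fintype ι] {E : Type*} [AddCommGroup E] [Module ℝ E]
    {v : ι → E} {x : E} (hx : x ∈ convexHull ℝ (Set.range v)) :
    ∃ lam : ι → ℝ, (∀ i, 0 ≤ lam i) ∧ ∑ i, lam i = 1 ∧ ∑ i, lam i • v i = x := by
  classical
  rw [convexHull_range_eq_exists_affineCombination] at hx
  obtain ⟨s, w, hw0, hw1, hcomb⟩ := hx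
  refine ⟨fun i => if i ∈ s then w i else 0, fun i => ?_, ?_, ?_⟩
  · dsimp only; split
    · exact hw0 i ‹_›
    · exact le_refl 0
  · dsimp only; rw [Finset.sum_ite_mem, Finset.univ_inter]; exact hw1
  · dsimp only
    rw [← hcomb, affineCombination_eq_linear_combination s v w hw1]
    have : ∀ i : ι, (if i ∈ s then w i else 0) • v i = if i ∈ s then w i • v i else 0 := by
      intro i; split <;> simp
    simp_rw [this]
    rw [Finset.sum_ite_mem, Finset.univ_inter]

lemma dil_subset (u : Fin 4 → Fin 3 → ℤ) (i : Fin 4) (k : ℕ)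
    (hl : ∀ j, j ≠ i → 1 ≤ latLen u i j) : dil u i k ⊆ lsimplex u := by
  apply convexHull_min _ (convex_convexHull ℝ _)
  rintro y ⟨j, rfl⟩
  show dilVert u i k j ∈ convexHull ℝ (Set.range fun t => toR (u t))
  by_cases hji : j = i
  · simp only [dilVert, if_pos hji]
    exact subset_convexHull ℝ (Set.range fun t => toR (u t)) (Set.mem_range_self i)
  · simp only [dilVert, if_neg hji]
    have hlj : (0:ℝ) < (latLen u i j : ℝ) := by exact_mod_cast hl j hji
    have hrm : (rmod u i j k : ℝ) ≤ (latLen u i j : ℝ) := by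
      have : rmod u i j k ≤ latLen u i j := Nat.mod_le _ _
      exact_mod_cast this
    have hrm0 : (0:ℝ) ≤ (rmod u i j k : ℝ) := Nat.cast_nonneg _
    exact (convex_convexHull ℝ (Set.range fun t => toR (u t)))
      (subset_convexHull ℝ (Set.range fun t => toR (u t)) (Set.mem_range_self j))
      (subset_convexHull ℝ (Set.range fun t => toR (u t)) (Set.mem_range_self i))
      (div_nonneg (by linarith) hlj.le) (div_nonneg hrm0 hlj.le)
      (by field_simp; ring)

lemma mem_dil (u : Fin 4 → Fin 3 → ℤ) (i : Fin 4) (ki : ℕ) (hki : 0 < ki)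
    (hkle : ∀ j, j ≠ i → ki ≤ latLen u i j)
    (lam : Fin 4 → ℝ) (hl0 : ∀ j, 0 ≤ lam j) (hl1 : ∑ j, lam j = 1)
    (hi : ∑ j ∈ Finset.univ.erase i, lam j * rr (latLen u i j) ki ≤ lam i) :
    (∑ j, lam j • toR (u j)) ∈ dil u i ki := by
  classical
  have hD : ∀ j, j ≠ i → 0 < (latLen u i j : ℝ) - (rmod u i j ki : ℝ) := by
    intro j hj
    have h1 : latLen u i j % ki < latLen u i j :=
      lt_of_lt_of_le (Nat.mod_lt _ hki) (hkle j hj)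
    have h2 : (rmod u i j ki : ℝ) < (latLen u i j : ℝ) := by
      have : rmod u i j ki < latLen u i j := h1
      exact_mod_cast this
    linarith
  have hlpos : ∀ j, j ≠ i → 0 < (latLen u i j : ℝ) := by
    intro j hj
    have h1 : 0 < latLen u i j := lt_of_lt_of_le hki (hkle j hj)
    exact_mod_cast h1
  have hrr : ∀ j, j ≠ i → rr (latLen u i j) ki
      = (rmod u i j ki : ℝ) / ((latLen u i j : ℝ) - (rmod u i j ki : ℝ)) := by
    intro j hj
    have hsub : ((latLen u i j - latLen u i j % ki : ℕ) : ℝ)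
        = (latLen u i j : ℝ) - (rmod u i j ki : ℝ) := by
      rw [Nat.cast_sub (Nat.mod_le _ _)]
      rfl
    rw [rr, hsub]
    rfl
  set μ : Fin 4 → ℝ := fun j => if j = i then
      lam i - ∑ j' ∈ Finset.univ.erase i, lam j' * rr (latLen u i j') ki
    else lam j * ((latLen u i j : ℝ) / ((latLen u i j : ℝ) - (rmod u i j ki : ℝ)))
    with hmudef
  have hμi : μ i = lam i - ∑ j' ∈ Finset.univ.erase i, lam j' * rr (latLen u i j') ki := by
    rw [hmudef]; exact if_pos rfl
  have hμj : ∀ j, j ≠ i → μ j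
      = lam j * ((latLen u i j : ℝ) / ((latLen u i j : ℝ) - (rmod u i j ki : ℝ))) := by
    intro j hj; rw [hmudef]; exact if_neg hj
  have hμ0 : ∀ j, 0 ≤ μ j := by
    intro j
    by_cases hj : j = i
    · rw [hj, hμi]; linarith
    · rw [hμj j hj]
      exact mul_nonneg (hl0 j) (div_nonneg (hlpos j hj).le (hD j hj).le)
  have hμerase : ∀ j ∈ Finset.univ.erase i,
      μ j = lam j + lam j * rr (latLen u i j) ki := by
    intro j hj
    have hji : j ≠ i := Finset.ne_of_mem_erase hj
    rw [hμj j hji, hrr j hji]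
    have h1 : (latLen u i j : ℝ) - (rmod u i j ki : ℝ) ≠ 0 := (hD j hji).ne'
    field_simp
    ring
  have hμsum : ∑ j, μ j = 1 := by
    rw [← Finset.add_sum_erase Finset.univ μ (Finset.mem_univ i),
      Finset.sum_congr rfl hμerase, Finset.sum_add_distrib, hμi, ← hl1,
      ← Finset.add_sum_erase Finset.univ lam (Finset.mem_univ i)]
    ring
  have hexp : ∀ j ∈ Finset.univ.erase i, μ j • dilVert u i ki j
      = lam j • toR (u j) + (lam j * rr (latLen u i j) ki) • toR (u i) := by
    intro j hj
    have hji : j ≠ i := Finset.ne_of_mem_erase hj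
    have h1 : (latLen u i j : ℝ) - (rmod u i j ki : ℝ) ≠ 0 := (hD j hji).ne'
    have h2 : (latLen u i j : ℝ) ≠ 0 := (hlpos j hji).ne'
    simp only [dilVert, if_neg hji]
    rw [smul_add, smul_smul, smul_smul]
    have s1 : μ j * (((latLen u i j : ℝ) - (rmod u i j ki : ℝ)) / (latLen u i j : ℝ))
        = lam j := by
      rw [hμj j hji]; field_simp
    have s2 : μ j * ((rmod u i j ki : ℝ) / (latLen u i j : ℝ))
        = lam j * rr (latLen u i j) ki := by
      rw [hμj j hji, hrr j hji]; field_simp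
    rw [s1, s2]
  have hvi : dilVert u i ki i = toR (u i) := by simp [dilVert]
  have hx2 : (∑ j, lam j • toR (u j)) = ∑ j, μ j • dilVert u i ki j := by
    rw [← Finset.add_sum_erase Finset.univ (fun j => μ j • dilVert u i ki j)
        (Finset.mem_univ i),
      ← Finset.add_sum_erase Finset.univ (fun j => lam j • toR (u j)) (Finset.mem_univ i),
      Finset.sum_congr rfl hexp, Finset.sum_add_distrib, ← Finset.sum_smul, hvi, hμi,
      sub_smul]
    abel
  rw [hx2]
  simp only [dil]
  exact mem_hull_of_weights hμ0 hμsum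

/-- a full-dimensional lattice simplex in `ℝ³` with lattice length at least 2
is the union of finitely many of its `k`-dilations `P_{i,k}` (with `2 ≤ k ≤ min_{j≠i} l_{ij}`). -/
theorem dim3_cover_by_dilations
    (u : Fin 4 → Fin 3 → ℤ)
    (hind : AffineIndependent ℝ fun i => toR (u i))
    (hlen : ∀ i j, i ≠ j → 2 ≤ latLen u i j) :
    ∃ (m : ℕ) (idx : Fin m → Fin 4 × ℕ),
      (∀ a, 2 ≤ (idx a).2 ∧ ∀ j, j ≠ (idx a).1 → (idx a).2 ≤ latLen u (idx a).1 j) ∧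
      lsimplex u = ⋃ a, dil u (idx a).1 (idx a).2 := by
  classical
  have hsymL : ∀ i j : Fin 4, latLen u i j = latLen u j i := by
    intro i j
    unfold latLen
    refine Finset.gcd_congr rfl fun x _ => ?_
    rw [← Int.natAbs_neg, neg_sub]
  obtain ⟨k, w, hk2, hkle, hw0, hwpos, hcol⟩ :=
    core (fun i j => latLen u i j) hsymL (fun i j h => hlen i j h)
  refine ⟨4, fun a => (a, k a), fun a => ⟨hk2 a, fun j hj => hkle a j (Ne.symm hj)⟩, ?_⟩
  apply Set.Subset.antisymm
  · intro x hx
    have hx' : x ∈ convexHull ℝ (Set.range fun i => toR (u i)) := hx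
    obtain ⟨lam, hl0, hl1, hxeq⟩ := hull_rep hx'
    obtain ⟨i, hi⟩ := dual_to_primal (fun i j => latLen u i j) k w hw0 hwpos hcol lam hl0
    refine Set.mem_iUnion.2 ⟨i, ?_⟩
    rw [← hxeq]
    exact mem_dil u i (k i) (lt_of_lt_of_le two_pos (hk2 i))
      (fun j hj => hkle i j (Ne.symm hj)) lam hl0 hl1 hi
  · intro x hx
    obtain ⟨a, ha⟩ := Set.mem_iUnion.1 hx
    exact dil_subset u a (k a)
      (fun j hj => le_trans one_le_two (hlen a j (Ne.symm hj))) ha
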